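/- Suppose a nonnegative sequence (eₜ) satisfies e_{t+1} ≤ β^{2t}(C₁ eₜ + C₂ e_{t-1} + C₃) with 0 < β < 1 and constants C₁, C₂, C₃ ≥ 0 and initial values e₀ = e₋₁ = 0. If β² (C₁ + C₂) ≤ q < 1 for some q, then the sequence is uniformly bounded: sup_t eₜ ≤ C₃/(1 - q). -/

import Mathlib

/-- Uniform boundedness of the consensus-error recursion
`e_{t+1} ≤ β^{2t}(C₁eₜ + C₂e_{t-1} + C₃)` with `e₀ = e₋₁ = 0`:
if `β²(C₁+C₂) ≤ q < 1` then `sup_t eₜ ≤ C₃/(1-q)`. -/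
theorem stmt7 (e : ℤ → ℝ) (β C₁ C₂ C₃ q : ℝ)
    (hβ0 : 0 < β) (hβ1 : β < 1)
    (hC₁ : 0 ≤ C₁) (hC₂ : 0 ≤ C₂) (hC₃ : 0 ≤ C₃)
    (hnonneg : ∀ t, 0 ≤ e t)
    (h0 : e 0 = 0) (hm1 : e (-1) = 0)
    (hrec : ∀ t : ℤ, 0 ≤ t →
      e (t + 1) ≤ β ^ (2 * t.toNat) * (C₁ * e t + C₂ * e (t - 1) + C₃))
    (hq : β ^ 2 * (C₁ + C₂) ≤ q) (hq1 : q < 1) :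
    ∀ t : ℤ, -1 ≤ t → e t ≤ C₃ / (1 - q) := by
  have hq0 : 0 ≤ q := le_trans (by positivity) hq
  have h1q : 0 < 1 - q := by linarith
  set M : ℝ := C₃ / (1 - q) with hM
  have hM0 : 0 ≤ M := by positivity
  have hMeq : q * M + C₃ = M := by
    rw [hM]; field_simp
    ring
  have hC₃M : C₃ ≤ M := by nlinarith
  have key : ∀ n : ℕ, e (n : ℤ) ≤ M ∧ e ((n : ℤ) - 1) ≤ M := by
    intro n
    induction n with
    | zero => norm_num [h0, hm1, hM0]
    | succ m IH =>
      obtain ⟨h1, h2⟩ := IH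
      have hcast : ((m + 1 : ℕ) : ℤ) - 1 = (m : ℤ) := by push_cast; ring
      refine ⟨?_, by rw [hcast]; exact h1⟩
      set t : ℤ := (m : ℤ) with hts
      have ht : 0 ≤ t := Int.natCast_nonneg m
      have hr := hrec t ht
      have htn : t.toNat = m := by simp [hts]
      have hstep : ((m + 1 : ℕ) : ℤ) = t + 1 := by push_cast [hts]; ring
      rw [hstep]
      rcases Nat.eq_zero_or_pos m with h | h
      · have ht0 : t = 0 := by simp [hts, h]
        rw [ht0] at hr ⊢
        have hem : e ((0:ℤ) - 1) = 0 := by norm_num [hm1]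
        rw [hem, h0] at hr
        simp only [Int.toNat_zero, mul_zero, pow_zero, one_mul] at hr
        linarith
      · have hn : 2 ≤ 2 * t.toNat := by omega
        have hβle : β ^ (2 * t.toNat) ≤ β ^ 2 :=
          pow_le_pow_of_le_one hβ0.le hβ1.le hn
        have hβn0 : 0 ≤ β ^ (2 * t.toNat) := by positivity
        have hβn1 : β ^ (2 * t.toNat) ≤ 1 :=
          pow_le_one₀ hβ0.le hβ1.le
        have hb1 : β ^ (2 * t.toNat) * (C₁ * e t) ≤ β ^ 2 * (C₁ * M) :=
          mul_le_mul hβle (mul_le_mul_of_nonneg_left h1 hC₁)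
            (mul_nonneg hC₁ (hnonneg t)) (sq_nonneg β)
        have hb2 : β ^ (2 * t.toNat) * (C₂ * e (t - 1)) ≤ β ^ 2 * (C₂ * M) :=
          mul_le_mul hβle (mul_le_mul_of_nonneg_left h2 hC₂)
            (mul_nonneg hC₂ (hnonneg (t - 1))) (sq_nonneg β)
        have hb3 : β ^ (2 * t.toNat) * C₃ ≤ C₃ := by nlinarith
        have hqM : β ^ 2 * (C₁ * M) + β ^ 2 * (C₂ * M) ≤ q * M := by nlinarith
        calc e (t + 1) ≤ β ^ (2 * t.toNat) * (C₁ * e t + C₂ * e (t - 1) + C₃) := hr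
          _ = β ^ (2 * t.toNat) * (C₁ * e t) + β ^ (2 * t.toNat) * (C₂ * e (t - 1))
              + β ^ (2 * t.toNat) * C₃ := by ring
          _ ≤ q * M + C₃ := by linarith
          _ = M := hMeq
  intro t ht
  rcases eq_or_lt_of_le ht with h | h
  · rw [← h]; simp [hm1, hM0]
  · have h0t : 0 ≤ t := by omega
    have := (key t.toNat).1
    rwa [Int.toNat_of_nonneg h0t] at this
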